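/- Let V be a finite-dimensional vector space over a field of characteristic 0 and Φ⁻ a skew-symmetric endomorphism of V ⊗ V (i.e., Φ⁻(V⊗V) ⊆ Λ²V and Φ⁻ vanishes on symmetric tensors, viewed as a map to S(V) of degree 2). Then the bilinear bracket {u,v} = Φ⁻(u ⊗ v) on generators extends to a Poisson bracket on the symmetric algebra S(V) if and only if the Schouten square [[Φ⁻, Φ⁻]] annihilates Λ³V, i.e., [[Φ⁻,Φ⁻]](Λ³V) = 0 in S³V. -/

import Mathlib

/- STATEMENT 8: Let V be a finite-dimensional vector space over a field of
characteristic 0 and Φ⁻ a skew-symmetric endomorphism of V ⊗ V.  Then the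
bracket {u,v} = Φ⁻(u⊗v) on generators extends to a Poisson bracket on the
symmetric algebra S(V) if and only if the Schouten square [[Φ⁻,Φ⁻]]
annihilates Λ³V in S³V, i.e. [[Φ⁻,Φ⁻]](Λ³V) lies in the kernel of the
projection V^{⊗3} → S³V.  (S(V) is realised as the polynomial algebra on a
basis of V.) -/

open TensorProduct

variable (k : Type*) [Field k] [CharZero k]
variable (V : Type*) [AddCommGroup V] [Module k V]

/-- Transposition of the first two factors of `V⊗V⊗V`. -/
noncomputable def s12 : V ⊗[k] (V ⊗[k] V) →ₗ[k] V ⊗[k] (V ⊗[k] V) :=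
  (TensorProduct.assoc k V V V).toLinearMap ∘ₗ
    (LinearMap.rTensor V (TensorProduct.comm k V V).toLinearMap) ∘ₗ
    (TensorProduct.assoc k V V V).symm.toLinearMap

/-- Transposition of the last two factors of `V⊗V⊗V`. -/
noncomputable def s23 : V ⊗[k] (V ⊗[k] V) →ₗ[k] V ⊗[k] (V ⊗[k] V) :=
  LinearMap.lTensor V (TensorProduct.comm k V V).toLinearMap

/-- `Φ` acting on the tensor factors 1,2 of `V⊗V⊗V`. -/
noncomputable def e12 (Φ : V ⊗[k] V →ₗ[k] V ⊗[k] V) :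
    V ⊗[k] (V ⊗[k] V) →ₗ[k] V ⊗[k] (V ⊗[k] V) :=
  (TensorProduct.assoc k V V V).toLinearMap ∘ₗ (LinearMap.rTensor V Φ) ∘ₗ
    (TensorProduct.assoc k V V V).symm.toLinearMap

/-- `Φ` acting on the tensor factors 2,3. -/
noncomputable def e23 (Φ : V ⊗[k] V →ₗ[k] V ⊗[k] V) :
    V ⊗[k] (V ⊗[k] V) →ₗ[k] V ⊗[k] (V ⊗[k] V) :=
  LinearMap.lTensor V Φ

/-- `Φ` acting on the tensor factors 1,3. -/
noncomputable def e13 (Φ : V ⊗[k] V →ₗ[k] V ⊗[k] V) :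
    V ⊗[k] (V ⊗[k] V) →ₗ[k] V ⊗[k] (V ⊗[k] V) :=
  (s23 k V) ∘ₗ (e12 k V Φ) ∘ₗ (s23 k V)

/-- The Schouten square `[[Φ,Φ]] = [Φ₁₂,Φ₁₃]+[Φ₁₂,Φ₂₃]+[Φ₁₃,Φ₂₃]` as an
endomorphism of `V⊗V⊗V`. -/
noncomputable def schoutenEnd (Φ : V ⊗[k] V →ₗ[k] V ⊗[k] V) :
    V ⊗[k] (V ⊗[k] V) →ₗ[k] V ⊗[k] (V ⊗[k] V) :=
  (e12 k V Φ ∘ₗ e13 k V Φ - e13 k V Φ ∘ₗ e12 k V Φ) +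
    (e12 k V Φ ∘ₗ e23 k V Φ - e23 k V Φ ∘ₗ e12 k V Φ) +
    (e13 k V Φ ∘ₗ e23 k V Φ - e23 k V Φ ∘ₗ e13 k V Φ)

/-- The antisymmetrizer of `u,v,w` (a generator of `Λ³V ⊆ V^{⊗3}`). -/
noncomputable def altTriple (u v w : V) : V ⊗[k] (V ⊗[k] V) :=
  u ⊗ₜ (v ⊗ₜ w) - u ⊗ₜ (w ⊗ₜ v) - v ⊗ₜ (u ⊗ₜ w) + v ⊗ₜ (w ⊗ₜ u) +
    w ⊗ₜ (u ⊗ₜ v) - w ⊗ₜ (v ⊗ₜ u)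

/-- The kernel of the projection `V^{⊗3} → S³V`. -/
noncomputable def symKernel : Submodule k (V ⊗[k] (V ⊗[k] V)) :=
  LinearMap.range (s12 k V - LinearMap.id) ⊔ LinearMap.range (s23 k V - LinearMap.id)

set_option linter.unusedSectionVars false

section Aux

variable {n : ℕ} (ι : V →ₗ[k] MvPolynomial (Fin n) k)

noncomputable def mu2 : V ⊗[k] V →ₗ[k] MvPolynomial (Fin n) k :=
  LinearMap.mul' k _ ∘ₗ TensorProduct.map ι ι

noncomputable def mu3 : V ⊗[k] (V ⊗[k] V) →ₗ[k] MvPolynomial (Fin n) k :=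
  LinearMap.mul' k _ ∘ₗ TensorProduct.map ι (mu2 k V ι)

@[simp] lemma mu2_tmul (u v : V) : mu2 k V ι (u ⊗ₜ v) = ι u * ι v := by
  simp [mu2]

@[simp] lemma mu3_tmul (u : V) (m : V ⊗[k] V) :
    mu3 k V ι (u ⊗ₜ m) = ι u * mu2 k V ι m := by
  simp [mu3]

@[simp] lemma s12_tmul (u v w : V) :
    s12 k V (u ⊗ₜ (v ⊗ₜ w)) = v ⊗ₜ (u ⊗ₜ w) := by simp [s12]

@[simp] lemma s23_tmul (u v w : V) :
    s23 k V (u ⊗ₜ (v ⊗ₜ w)) = u ⊗ₜ (w ⊗ₜ v) := by simp [s23]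

lemma e12_tmul (Φ : V ⊗[k] V →ₗ[k] V ⊗[k] V) (u v w : V) :
    e12 k V Φ (u ⊗ₜ (v ⊗ₜ w)) = (TensorProduct.assoc k V V V) (Φ (u ⊗ₜ v) ⊗ₜ w) := by
  simp [e12]

lemma e23_tmul (Φ : V ⊗[k] V →ₗ[k] V ⊗[k] V) (u : V) (m : V ⊗[k] V) :
    e23 k V Φ (u ⊗ₜ m) = u ⊗ₜ (Φ m) := by simp [e23]

lemma e13_tmul (Φ : V ⊗[k] V →ₗ[k] V ⊗[k] V) (u v w : V) :
    e13 k V Φ (u ⊗ₜ (v ⊗ₜ w)) =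
      s23 k V ((TensorProduct.assoc k V V V) (Φ (u ⊗ₜ w) ⊗ₜ v)) := by
  simp [e13, e12]

lemma mu2_comm (m : V ⊗[k] V) :
    mu2 k V ι ((TensorProduct.comm k V V) m) = mu2 k V ι m := by
  induction m using TensorProduct.induction_on with
  | zero => simp
  | tmul x y => simp [mul_comm]
  | add x y hx hy => simp [hx, hy]

lemma mu3_assoc (m : V ⊗[k] V) (c : V) :
    mu3 k V ι ((TensorProduct.assoc k V V V) (m ⊗ₜ c)) = mu2 k V ι m * ι c := by
  induction m using TensorProduct.induction_on with
  | zero => simp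
  | tmul x y => simp [mul_assoc]
  | add x y hx hy => simp [add_tmul, hx, hy, add_mul]

lemma mu3_s23 (x : V ⊗[k] (V ⊗[k] V)) : mu3 k V ι (s23 k V x) = mu3 k V ι x := by
  induction x using TensorProduct.induction_on with
  | zero => simp
  | tmul u m =>
    have : s23 k V (u ⊗ₜ m) = u ⊗ₜ ((TensorProduct.comm k V V) m) := by simp [s23]
    rw [this, mu3_tmul, mu3_tmul, mu2_comm]
  | add x y hx hy => simp [map_add, hx, hy]

lemma mu3_s12 (x : V ⊗[k] (V ⊗[k] V)) : mu3 k V ι (s12 k V x) = mu3 k V ι x := by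
  induction x using TensorProduct.induction_on with
  | zero => simp
  | tmul u m =>
    induction m using TensorProduct.induction_on with
    | zero => simp
    | tmul v w => simp [mul_comm, mul_left_comm]
    | add p q hp hq => simp only [tmul_add, map_add, hp, hq]
  | add x y hx hy => simp [map_add, hx, hy]

end Aux

section Key

variable {n : ℕ} (ι : V →ₗ[k] MvPolynomial (Fin n) k)
variable (Φ : V ⊗[k] V →ₗ[k] V ⊗[k] V)
variable (hskew : (TensorProduct.comm k V V).toLinearMap ∘ₗ Φ ∘ₗ
      (TensorProduct.comm k V V).toLinearMap = -Φ)
variable (P : MvPolynomial (Fin n) k →ₗ[k] MvPolynomial (Fin n) k →ₗ[k] MvPolynomial (Fin n) k)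
variable (hsk : ∀ f g, P f g = -(P g f))
variable (hbd : ∀ f g h, P f (g * h) = g * (P f h) + (P f g) * h)
variable (hgen : ∀ u v : V, P (ι u) (ι v) = mu2 k V ι (Φ (u ⊗ₜ v)))

include hskew in
lemma mu2_skew (u v : V) : mu2 k V ι (Φ (v ⊗ₜ u)) = -(mu2 k V ι (Φ (u ⊗ₜ v))) := by
  have h := congrFun (congrArg DFunLike.coe hskew) (u ⊗ₜ v)
  simp only [LinearMap.comp_apply, LinearEquiv.coe_coe, TensorProduct.comm_tmul,
    LinearMap.neg_apply] at h
  have : mu2 k V ι ((TensorProduct.comm k V V) (Φ (v ⊗ₜ u))) = mu2 k V ι (-(Φ (u ⊗ₜ v))) := by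
    rw [h]
  rwa [mu2_comm, map_neg] at this

include hbd hgen in
lemma groupA (u : V) (m : V ⊗[k] V) :
    mu3 k V ι (e12 k V Φ (u ⊗ₜ m)) + mu3 k V ι (e13 k V Φ (u ⊗ₜ m)) =
      P (ι u) (mu2 k V ι m) := by
  induction m using TensorProduct.induction_on with
  | zero => simp
  | tmul a c =>
    rw [e12_tmul, e13_tmul, mu3_assoc, mu3_s23, mu3_assoc, mu2_tmul, hbd,
      hgen, hgen, mul_comm (ι a)]
    ring
  | add p q hp hq =>
    simp only [tmul_add, map_add]
    linear_combination hp + hq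

include hskew hbd hgen in
lemma groupB (w : V) (m : V ⊗[k] V) :
    mu3 k V ι (e13 k V Φ ((TensorProduct.assoc k V V V) (m ⊗ₜ w))) +
      mu3 k V ι (e23 k V Φ ((TensorProduct.assoc k V V V) (m ⊗ₜ w))) =
      -(P (ι w) (mu2 k V ι m)) := by
  induction m using TensorProduct.induction_on with
  | zero => simp
  | tmul a c =>
    have h1 : (TensorProduct.assoc k V V V) ((a ⊗ₜ c) ⊗ₜ w) = a ⊗ₜ (c ⊗ₜ w) := rfl
    rw [h1, e13_tmul, e23_tmul, mu3_s23, mu3_assoc, mu3_tmul, mu2_tmul, hbd, hgen, hgen,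
      mu2_skew k V ι Φ hskew w a, mu2_skew k V ι Φ hskew w c]
    ring
  | add p q hp hq =>
    simp only [add_tmul, map_add]
    linear_combination hp + hq

include hskew hbd hgen in
lemma groupC (v : V) (m : V ⊗[k] V) :
    mu3 k V ι (e12 k V Φ (s23 k V ((TensorProduct.assoc k V V V) (m ⊗ₜ v)))) -
      mu3 k V ι (e23 k V Φ (s23 k V ((TensorProduct.assoc k V V V) (m ⊗ₜ v)))) =
      -(P (ι v) (mu2 k V ι m)) := by
  induction m using TensorProduct.induction_on with
  | zero => simp
  | tmul a c =>
    have h1 : s23 k V ((TensorProduct.assoc k V V V) ((a ⊗ₜ c) ⊗ₜ v)) = a ⊗ₜ (v ⊗ₜ c) := by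
      have : (TensorProduct.assoc k V V V) ((a ⊗ₜ c) ⊗ₜ v) = a ⊗ₜ (c ⊗ₜ v) := rfl
      rw [this, s23_tmul]
    rw [h1, e12_tmul, e23_tmul, mu3_assoc, mu3_tmul, mu2_tmul, hbd, hgen, hgen,
      mu2_skew k V ι Φ hskew v a]
    ring
  | add p q hp hq =>
    simp only [add_tmul, map_add]
    linear_combination hp + hq

include hskew hsk hbd hgen in
lemma key (u v w : V) :
    mu3 k V ι (schoutenEnd k V Φ (u ⊗ₜ (v ⊗ₜ w))) =
      P (ι u) (P (ι v) (ι w)) + P (ι v) (P (ι w) (ι u)) + P (ι w) (P (ι u) (ι v)) := by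
  have hx : schoutenEnd k V Φ (u ⊗ₜ (v ⊗ₜ w)) =
      (e12 k V Φ (e13 k V Φ (u ⊗ₜ (v ⊗ₜ w))) - e13 k V Φ (e12 k V Φ (u ⊗ₜ (v ⊗ₜ w)))) +
      (e12 k V Φ (e23 k V Φ (u ⊗ₜ (v ⊗ₜ w))) - e23 k V Φ (e12 k V Φ (u ⊗ₜ (v ⊗ₜ w)))) +
      (e13 k V Φ (e23 k V Φ (u ⊗ₜ (v ⊗ₜ w))) - e23 k V Φ (e13 k V Φ (u ⊗ₜ (v ⊗ₜ w)))) := by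
    simp [schoutenEnd, LinearMap.add_apply, LinearMap.sub_apply, LinearMap.comp_apply]
  rw [hx]
  have h23 : e23 k V Φ (u ⊗ₜ (v ⊗ₜ w)) = u ⊗ₜ (Φ (v ⊗ₜ w)) := e23_tmul k V Φ u _
  have h12 : e12 k V Φ (u ⊗ₜ (v ⊗ₜ w)) =
      (TensorProduct.assoc k V V V) (Φ (u ⊗ₜ v) ⊗ₜ w) := e12_tmul k V Φ u v w
  have h13 : e13 k V Φ (u ⊗ₜ (v ⊗ₜ w)) =
      s23 k V ((TensorProduct.assoc k V V V) (Φ (u ⊗ₜ w) ⊗ₜ v)) := e13_tmul k V Φ u v w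
  have hA := groupA k V ι Φ P hbd hgen u (Φ (v ⊗ₜ w))
  have hB := groupB k V ι Φ hskew P hbd hgen w (Φ (u ⊗ₜ v))
  have hC := groupC k V ι Φ hskew P hbd hgen v (Φ (u ⊗ₜ w))
  simp only [map_add, map_sub]
  rw [h23, h12, h13]
  have e1 : P (ι u) (mu2 k V ι (Φ (v ⊗ₜ w))) = P (ι u) (P (ι v) (ι w)) := by rw [hgen]
  have e2 : P (ι w) (mu2 k V ι (Φ (u ⊗ₜ v))) = P (ι w) (P (ι u) (ι v)) := by rw [hgen]
  have e3 : P (ι v) (mu2 k V ι (Φ (u ⊗ₜ w))) = -(P (ι v) (P (ι w) (ι u))) := by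
    rw [← hgen u w, hsk (ι u) (ι w), map_neg]
  rw [e1] at hA; rw [e2] at hB; rw [e3] at hC
  linear_combination hA - hB + hC

end Key

section Kernel

variable {n : ℕ}

lemma mem12 (x : V ⊗[k] (V ⊗[k] V)) : ((s12 k V - LinearMap.id) : V ⊗[k] (V ⊗[k] V) →ₗ[k] V ⊗[k] (V ⊗[k] V)) x ∈ symKernel k V :=
  Submodule.mem_sup_left ⟨x, rfl⟩

lemma mem23 (x : V ⊗[k] (V ⊗[k] V)) : ((s23 k V - LinearMap.id) : V ⊗[k] (V ⊗[k] V) →ₗ[k] V ⊗[k] (V ⊗[k] V)) x ∈ symKernel k V :=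
  Submodule.mem_sup_right ⟨x, rfl⟩

lemma k12 (u v w : V) : u ⊗ₜ (v ⊗ₜ w) - v ⊗ₜ (u ⊗ₜ w) ∈ symKernel k V := by
  have := mem12 k V (v ⊗ₜ (u ⊗ₜ w))
  simpa using this

lemma k23 (u v w : V) : u ⊗ₜ (v ⊗ₜ w) - u ⊗ₜ (w ⊗ₜ v) ∈ symKernel k V := by
  have := mem23 k V (u ⊗ₜ (w ⊗ₜ v))
  simpa using this

lemma kcyc (u v w : V) : u ⊗ₜ (v ⊗ₜ w) - v ⊗ₜ (w ⊗ₜ u) ∈ symKernel k V := by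
  have h1 := k12 k V u v w
  have h2 := k23 k V v u w
  have := Submodule.add_mem _ h1 h2
  convert this using 1
  abel

lemma kcyc' (u v w : V) : u ⊗ₜ (v ⊗ₜ w) - w ⊗ₜ (u ⊗ₜ v) ∈ symKernel k V := by
  have h1 := k23 k V u v w
  have h2 := k12 k V u w v
  have := Submodule.add_mem _ h1 h2
  convert this using 1
  abel

lemma krev (u v w : V) : u ⊗ₜ (v ⊗ₜ w) - w ⊗ₜ (v ⊗ₜ u) ∈ symKernel k V := by
  have h1 := kcyc k V u v w
  have h2 := k12 k V v w u
  have := Submodule.add_mem _ h1 h2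
  convert this using 1
  abel

lemma mu3_symKernel (ι : V →ₗ[k] MvPolynomial (Fin n) k) (x : V ⊗[k] (V ⊗[k] V))
    (hx : x ∈ symKernel k V) : mu3 k V ι x = 0 := by
  rcases Submodule.mem_sup.mp hx with ⟨y, hy, z, hz, rfl⟩
  rcases hy with ⟨y', rfl⟩
  rcases hz with ⟨z', rfl⟩
  simp only [map_add, LinearMap.sub_apply, LinearMap.id_apply, map_sub, mu3_s12, mu3_s23]
  abel

end Kernel

section SMap

open MvPolynomial

variable {n : ℕ}

/-- Auxiliary: `(1/6) ∑ᵢⱼₗ (∂ᵢ∂ⱼ∂ₗ f)(0) • bᵢ⊗bⱼ⊗bₗ`, a retraction used to show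
`ker μ₃ ⊆ symKernel`. -/
noncomputable def sMap (b : Module.Basis (Fin n) k V) :
    MvPolynomial (Fin n) k →ₗ[k] V ⊗[k] (V ⊗[k] V) :=
  (6 : k)⁻¹ • ∑ i : Fin n, ∑ j : Fin n, ∑ l : Fin n,
    LinearMap.smulRight
      (MvPolynomial.lcoeff k (0 : Fin n →₀ ℕ) ∘ₗ (pderiv i).toLinearMap ∘ₗ
        (pderiv j).toLinearMap ∘ₗ (pderiv l).toLinearMap)
      (b i ⊗ₜ (b j ⊗ₜ b l))

lemma d1 (p q r l : Fin n) :
    pderiv l (X p * (X q * X r) : MvPolynomial (Fin n) k) =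
      (if p = l then (1:k) else 0) • (X q * X r) +
      ((if q = l then (1:k) else 0) • (X p * X r) +
       (if r = l then (1:k) else 0) • (X p * X q)) := by
  by_cases h1 : p = l <;> by_cases h2 : q = l <;> by_cases h3 : r = l <;>
    subst_eqs <;>
    simp_all [pderiv_mul, pderiv_X_of_ne, smul_eq_C_mul] <;> ring

lemma d2 (a c i j : Fin n) :
    MvPolynomial.coeff 0 (pderiv i (pderiv j (X a * X c : MvPolynomial (Fin n) k))) =
      (if a = j then (1:k) else 0) * (if c = i then (1:k) else 0) +
      (if c = j then (1:k) else 0) * (if a = i then (1:k) else 0) := by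
  by_cases h1 : a = j <;> by_cases h2 : c = j <;> by_cases h3 : a = i <;> by_cases h4 : c = i <;>
    subst_eqs <;>
    simp_all [pderiv_mul, pderiv_X_of_ne]

lemma trip (p q r i j l : Fin n) :
    MvPolynomial.coeff 0 (pderiv i (pderiv j (pderiv l (X p * (X q * X r) : MvPolynomial (Fin n) k)))) =
      (if p = l then (1:k) else 0) *
        ((if q = j then (1:k) else 0) * (if r = i then (1:k) else 0) +
         (if r = j then (1:k) else 0) * (if q = i then (1:k) else 0)) +
      ((if q = l then (1:k) else 0) *
        ((if p = j then (1:k) else 0) * (if r = i then (1:k) else 0) +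
         (if r = j then (1:k) else 0) * (if p = i then (1:k) else 0)) +
       (if r = l then (1:k) else 0) *
        ((if p = j then (1:k) else 0) * (if q = i then (1:k) else 0) +
         (if q = j then (1:k) else 0) * (if p = i then (1:k) else 0))) := by
  rw [d1]
  simp only [map_add, Derivation.map_smul]
  simp only [MvPolynomial.coeff_add, MvPolynomial.coeff_smul, smul_eq_mul, d2]

end SMap

section SMapBasis

open MvPolynomial

variable {n : ℕ} (b : Module.Basis (Fin n) k V)

lemma sMap_basis (p q r : Fin n) :
    sMap k V b (X p * (X q * X r)) =
      (6 : k)⁻¹ • (b r ⊗ₜ (b q ⊗ₜ b p) + b q ⊗ₜ (b r ⊗ₜ b p) + b r ⊗ₜ (b p ⊗ₜ b q) +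
        b p ⊗ₜ (b r ⊗ₜ b q) + b q ⊗ₜ (b p ⊗ₜ b r) + b p ⊗ₜ (b q ⊗ₜ b r)) := by
  rw [sMap]
  simp only [LinearMap.smul_apply, LinearMap.coe_sum, Finset.sum_apply,
    LinearMap.smulRight_apply, LinearMap.comp_apply, Derivation.coeFn_coe,
    lcoeff_apply]
  congr 1
  simp only [trip, add_smul, mul_smul, ite_smul, one_smul, zero_smul, smul_zero,
    Finset.sum_add_distrib, Finset.sum_ite_eq, Finset.mem_univ, if_true]
  abel

end SMapBasis

section KerChar

open MvPolynomial

variable {n : ℕ} (b : Module.Basis (Fin n) k V)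

lemma basis_mem (p q r : Fin n) :
    (b p ⊗ₜ (b q ⊗ₜ b r)) -
      sMap k V b (mu3 k V ((Module.Basis.constr b k) fun i => (X i : MvPolynomial (Fin n) k))
        (b p ⊗ₜ (b q ⊗ₜ b r))) ∈ symKernel k V := by
  set ι := (Module.Basis.constr b k) fun i => (X i : MvPolynomial (Fin n) k) with hι
  have hmu : mu3 k V ι (b p ⊗ₜ (b q ⊗ₜ b r)) = X p * (X q * X r) := by
    rw [mu3_tmul, mu2_tmul, hι]
    simp [Module.Basis.constr_basis]
  rw [hmu, sMap_basis]
  set x := b p ⊗ₜ[k] (b q ⊗ₜ[k] b r) with hx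
  set T := (b r ⊗ₜ (b q ⊗ₜ b p) + b q ⊗ₜ (b r ⊗ₜ b p) + b r ⊗ₜ (b p ⊗ₜ b q) +
    b p ⊗ₜ (b r ⊗ₜ b q) + b q ⊗ₜ (b p ⊗ₜ b r) + x : V ⊗[k] (V ⊗[k] V)) with hT
  set D := ((x - b r ⊗ₜ (b q ⊗ₜ b p)) + (x - b q ⊗ₜ (b r ⊗ₜ b p)) + (x - b r ⊗ₜ (b p ⊗ₜ b q)) +
    (x - b p ⊗ₜ (b r ⊗ₜ b q)) + (x - b q ⊗ₜ (b p ⊗ₜ b r)) : V ⊗[k] (V ⊗[k] V)) with hD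
  have hDK : D ∈ symKernel k V := by
    apply add_mem (add_mem (add_mem (add_mem ?_ ?_) ?_) ?_) ?_
    · exact krev k V (b p) (b q) (b r)
    · exact kcyc k V (b p) (b q) (b r)
    · exact kcyc' k V (b p) (b q) (b r)
    · exact k23 k V (b p) (b q) (b r)
    · exact k12 k V (b p) (b q) (b r)
  have h6 : ((6:k)⁻¹ * 6) = 1 := by norm_num
  have hDeq : (6:k) • x - T = D := by rw [hT, hD]; module
  have key : x - (6:k)⁻¹ • T = (6:k)⁻¹ • D := by
    calc x - (6:k)⁻¹ • T = (6:k)⁻¹ • ((6:k) • x) - (6:k)⁻¹ • T := by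
          rw [smul_smul, h6, one_smul]
      _ = (6:k)⁻¹ • ((6:k) • x - T) := by rw [smul_sub]
      _ = (6:k)⁻¹ • D := by rw [hDeq]
  rw [key]
  exact Submodule.smul_mem _ _ hDK

lemma ker_mu3 (x : V ⊗[k] (V ⊗[k] V))
    (hx : mu3 k V ((Module.Basis.constr b k) fun i => (X i : MvPolynomial (Fin n) k)) x = 0) :
    x ∈ symKernel k V := by
  set ι := (Module.Basis.constr b k) fun i => (X i : MvPolynomial (Fin n) k) with hι
  have hT : ∀ y : V ⊗[k] (V ⊗[k] V), y - sMap k V b (mu3 k V ι y) ∈ symKernel k V := by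
    have hle : (⊤ : Submodule k (V ⊗[k] (V ⊗[k] V))) ≤
        Submodule.comap (LinearMap.id - (sMap k V b) ∘ₗ (mu3 k V ι)) (symKernel k V) := by
      rw [← Module.Basis.span_eq (Module.Basis.tensorProduct b (Module.Basis.tensorProduct b b)), Submodule.span_le]
      rintro x ⟨⟨i, j, l⟩, rfl⟩
      simp only [Submodule.mem_comap, LinearMap.sub_apply, LinearMap.id_apply,
        LinearMap.comp_apply, Module.Basis.tensorProduct_apply]
      exact basis_mem k V b i j l
    intro y
    have := hle (Submodule.mem_top : y ∈ ⊤)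
    simpa using this
  have := hT x
  rw [hx, map_zero, sub_zero] at this
  exact this

end KerChar

section PConstruction

open MvPolynomial

variable {n : ℕ} (b : Module.Basis (Fin n) k V) (Φ : V ⊗[k] V →ₗ[k] V ⊗[k] V)

/-- The candidate Poisson bracket `P f g = ∑ᵢⱼ π(i,j) ∂ᵢf ∂ⱼg`. -/
noncomputable def Pmap : MvPolynomial (Fin n) k →ₗ[k] MvPolynomial (Fin n) k →ₗ[k]
    MvPolynomial (Fin n) k :=
  LinearMap.mk₂ k
    (fun f g => ∑ i : Fin n, ∑ j : Fin n,
      mu2 k V ((Module.Basis.constr b k) fun i => (X i : MvPolynomial (Fin n) k)) (Φ (b i ⊗ₜ b j)) *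
        (pderiv i f * pderiv j g))
    (fun f f' g => by
      simp only [map_add]
      rw [← Finset.sum_add_distrib]
      refine Finset.sum_congr rfl fun i _ => ?_
      rw [← Finset.sum_add_distrib]
      refine Finset.sum_congr rfl fun j _ => ?_
      ring)
    (fun c f g => by
      simp only [Derivation.map_smul, Finset.smul_sum]
      refine Finset.sum_congr rfl fun i _ => ?_
      refine Finset.sum_congr rfl fun j _ => ?_
      rw [smul_eq_C_mul, smul_eq_C_mul]
      ring)
    (fun f g g' => by
      simp only [map_add]
      rw [← Finset.sum_add_distrib]
      refine Finset.sum_congr rfl fun i _ => ?_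
      rw [← Finset.sum_add_distrib]
      refine Finset.sum_congr rfl fun j _ => ?_
      ring)
    (fun c f g => by
      simp only [Derivation.map_smul, Finset.smul_sum]
      refine Finset.sum_congr rfl fun i _ => ?_
      refine Finset.sum_congr rfl fun j _ => ?_
      rw [smul_eq_C_mul, smul_eq_C_mul]
      ring)

lemma Pmap_apply (f g : MvPolynomial (Fin n) k) :
    Pmap k V b Φ f g = ∑ i : Fin n, ∑ j : Fin n,
      mu2 k V ((Module.Basis.constr b k) fun i => (X i : MvPolynomial (Fin n) k)) (Φ (b i ⊗ₜ b j)) *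
        (pderiv i f * pderiv j g) := rfl

lemma Pmap_skew (hskew : (TensorProduct.comm k V V).toLinearMap ∘ₗ Φ ∘ₗ
      (TensorProduct.comm k V V).toLinearMap = -Φ)
    (f g : MvPolynomial (Fin n) k) :
    Pmap k V b Φ f g = -(Pmap k V b Φ g f) := by
  set ι := (Module.Basis.constr b k) fun i => (X i : MvPolynomial (Fin n) k) with hι
  rw [Pmap_apply, Pmap_apply]
  rw [Finset.sum_comm]
  rw [← Finset.sum_neg_distrib]
  refine Finset.sum_congr rfl fun j _ => ?_
  rw [← Finset.sum_neg_distrib]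
  refine Finset.sum_congr rfl fun i _ => ?_
  rw [mu2_skew k V ι Φ hskew (b j) (b i)]
  ring

lemma Pmap_bider (f g h : MvPolynomial (Fin n) k) :
    Pmap k V b Φ f (g * h) = g * (Pmap k V b Φ f h) + (Pmap k V b Φ f g) * h := by
  rw [Pmap_apply, Pmap_apply, Pmap_apply, Finset.mul_sum, Finset.sum_mul,
    ← Finset.sum_add_distrib]
  refine Finset.sum_congr rfl fun i _ => ?_
  rw [Finset.mul_sum, Finset.sum_mul, ← Finset.sum_add_distrib]
  refine Finset.sum_congr rfl fun j _ => ?_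
  rw [pderiv_mul]
  ring

lemma Pmap_gen (u v : V) :
    Pmap k V b Φ (((Module.Basis.constr b k) fun i => (X i : MvPolynomial (Fin n) k)) u)
      (((Module.Basis.constr b k) fun i => (X i : MvPolynomial (Fin n) k)) v) =
      mu2 k V ((Module.Basis.constr b k) fun i => (X i : MvPolynomial (Fin n) k)) (Φ (u ⊗ₜ v)) := by
  set ι := (Module.Basis.constr b k) fun i => (X i : MvPolynomial (Fin n) k) with hι
  have hbase : ∀ p q : Fin n, Pmap k V b Φ (X p) (X q) = mu2 k V ι (Φ (b p ⊗ₜ b q)) := by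
    intro p q
    rw [Pmap_apply]
    have : ∀ i j : Fin n,
        mu2 k V ι (Φ (b i ⊗ₜ b j)) * (pderiv i (X p : MvPolynomial (Fin n) k) *
          pderiv j (X q : MvPolynomial (Fin n) k)) =
        if q = j then (if p = i then mu2 k V ι (Φ (b i ⊗ₜ b j)) else 0) else 0 := by
      intro i j
      by_cases h1 : p = i <;> by_cases h2 : q = j <;>
        simp [h1, h2, pderiv_X_self, pderiv_X_of_ne]
    simp only [← hι, this, Finset.sum_ite_eq, Finset.mem_univ, if_true]
  have hu := Module.Basis.sum_repr b u
  have hv := Module.Basis.sum_repr b v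
  rw [← hu, ← hv]
  simp only [map_sum, map_smul, LinearMap.coe_sum, Finset.sum_apply, LinearMap.smul_apply,
    sum_tmul, tmul_sum, smul_tmul', tmul_smul]
  refine Finset.sum_congr rfl fun x _ => ?_
  congr 1
  refine Finset.sum_congr rfl fun y _ => ?_
  rw [Module.Basis.constr_basis, Module.Basis.constr_basis, hbase]
  rw [← smul_tmul', map_smul, map_smul]

end PConstruction

section Jacobi

open MvPolynomial

variable {n : ℕ}
variable (P : MvPolynomial (Fin n) k →ₗ[k] MvPolynomial (Fin n) k →ₗ[k] MvPolynomial (Fin n) k)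
variable (hsk : ∀ f g, P f g = -(P g f))
variable (hbd : ∀ f g h, P f (g * h) = g * (P f h) + (P f g) * h)

include hbd in
lemma P_one (f : MvPolynomial (Fin n) k) : P f 1 = 0 := by
  have h := hbd f 1 1
  rw [mul_one, one_mul, mul_one] at h
  linear_combination -h

include hbd in
lemma P_C (f : MvPolynomial (Fin n) k) (a : k) : P f (C a) = 0 := by
  have h : (C a : MvPolynomial (Fin n) k) = a • 1 := by
    rw [smul_eq_C_mul, mul_one]
  rw [h, map_smul, P_one k P hbd, smul_zero]

include hsk hbd in
lemma Pmul1 (f₁ f₂ g : MvPolynomial (Fin n) k) :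
    P (f₁ * f₂) g = f₁ * P f₂ g + P f₁ g * f₂ := by
  rw [hsk (f₁ * f₂) g, hbd g f₁ f₂, hsk f₂ g, hsk f₁ g]
  ring

include hsk in
lemma Jswap (f g h : MvPolynomial (Fin n) k) :
    P f (P g h) + P g (P h f) + P h (P f g) =
      -(P g (P f h) + P f (P h g) + P h (P g f)) := by
  have e1 : P g (P f h) = -(P g (P h f)) := by rw [hsk f h, map_neg]
  have e2 : P f (P h g) = -(P f (P g h)) := by rw [hsk h g, map_neg]
  have e3 : P h (P g f) = -(P h (P f g)) := by rw [hsk g f, map_neg]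
  linear_combination e1 + e2 + e3

include hsk hbd in
lemma Jleib (f₁ f₂ g h : MvPolynomial (Fin n) k) :
    P (f₁ * f₂) (P g h) + P g (P h (f₁ * f₂)) + P h (P (f₁ * f₂) g) =
      f₁ * (P f₂ (P g h) + P g (P h f₂) + P h (P f₂ g)) +
      (P f₁ (P g h) + P g (P h f₁) + P h (P f₁ g)) * f₂ := by
  have h1 : P (f₁ * f₂) (P g h) = f₁ * P f₂ (P g h) + P f₁ (P g h) * f₂ :=
    Pmul1 k P hsk hbd f₁ f₂ (P g h)
  have h2 : P h (f₁ * f₂) = f₁ * P h f₂ + P h f₁ * f₂ := hbd h f₁ f₂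
  have h3 : P g (P h (f₁ * f₂)) =
      f₁ * P g (P h f₂) + P g f₁ * P h f₂ + (P h f₁ * P g f₂ + P g (P h f₁) * f₂) := by
    rw [h2, map_add, hbd g f₁ (P h f₂), hbd g (P h f₁) f₂]
  have h4 : P (f₁ * f₂) g = f₁ * P f₂ g + P f₁ g * f₂ := Pmul1 k P hsk hbd f₁ f₂ g
  have h5 : P h (P (f₁ * f₂) g) =
      f₁ * P h (P f₂ g) + P h f₁ * P f₂ g + (P f₁ g * P h f₂ + P h (P f₁ g) * f₂) := by
    rw [h4, map_add, hbd h f₁ (P f₂ g), hbd h (P f₁ g) f₂]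
  have c1 : P f₂ g = -(P g f₂) := hsk f₂ g
  have c2 : P f₁ g = -(P g f₁) := hsk f₁ g
  linear_combination h1 + h3 + h5 + (P h f₁) * c1 + (P h f₂) * c2

include hsk hbd in
lemma jacobi_of_base
    (hbase : ∀ p q r : Fin n,
      P (X p) (P (X q) (X r)) + P (X q) (P (X r) (X p)) + P (X r) (P (X p) (X q)) = 0) :
    ∀ f g h, P f (P g h) + P g (P h f) + P h (P f g) = 0 := by
  have JC : ∀ (a : k) (g h : MvPolynomial (Fin n) k),
      P (C a) (P g h) + P g (P h (C a)) + P h (P (C a) g) = 0 := by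
    intro a g h
    have e1 : P (C a) (P g h) = 0 := by rw [hsk (C a) (P g h), P_C k P hbd, neg_zero]
    have e2 : P h (C a) = 0 := P_C k P hbd h a
    have e3 : P (C a) g = 0 := by rw [hsk (C a) g, P_C k P hbd, neg_zero]
    rw [e1, e2, e3, map_zero, map_zero]
    ring
  have step1 : ∀ (f : MvPolynomial (Fin n) k) (q r : Fin n),
      P f (P (X q) (X r)) + P (X q) (P (X r) f) + P (X r) (P f (X q)) = 0 := by
    intro f q r
    induction f using MvPolynomial.induction_on with
    | C a => exact JC a (X q) (X r)
    | add f f' hf hf' =>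
      simp only [map_add, LinearMap.add_apply]
      linear_combination hf + hf'
    | mul_X f i hf =>
      linear_combination Jleib k P hsk hbd f (X i) (X q) (X r) + f * hbase i q r + hf * X i
  have step2 : ∀ (f g : MvPolynomial (Fin n) k) (r : Fin n),
      P f (P g (X r)) + P g (P (X r) f) + P (X r) (P f g) = 0 := by
    intro f g r
    induction g using MvPolynomial.induction_on with
    | C a =>
      linear_combination Jswap k P hsk f (C a) (X r) - JC a f (X r)
    | add g g' hg hg' =>
      simp only [map_add, LinearMap.add_apply]
      linear_combination hg + hg'
    | mul_X g i hg =>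
      linear_combination Jswap k P hsk f (g * X i) (X r) -
        Jleib k P hsk hbd g (X i) f (X r) - g * Jswap k P hsk (X i) f (X r) -
        Jswap k P hsk g f (X r) * X i + g * step1 f i r + hg * X i
  intro f g h
  induction h using MvPolynomial.induction_on with
  | C a => linear_combination JC a f g
  | add h h' hh hh' =>
    simp only [map_add, LinearMap.add_apply]
    linear_combination hh + hh'
  | mul_X h i hh =>
    linear_combination Jleib k P hsk hbd h (X i) f g + h * step2 f g i + hh * X i

end Jacobi

open MvPolynomial

theorem stmt8 (n : ℕ) (b : Module.Basis (Fin n) k V)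
    (Φ : V ⊗[k] V →ₗ[k] V ⊗[k] V)
    (hskew : (TensorProduct.comm k V V).toLinearMap ∘ₗ Φ ∘ₗ
      (TensorProduct.comm k V V).toLinearMap = -Φ) :
    -- S(V) is the polynomial ring on the basis, with V included via ι :
    ∀ ι : V →ₗ[k] MvPolynomial (Fin n) k,
      ι = (Module.Basis.constr b k) (fun i => (MvPolynomial.X i : MvPolynomial (Fin n) k)) →
      ((∃ P : MvPolynomial (Fin n) k →ₗ[k] MvPolynomial (Fin n) k →ₗ[k]
            MvPolynomial (Fin n) k,
          -- skew-symmetric biderivation satisfying the Jacobi identity: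
          (∀ f g, P f g = -(P g f)) ∧
          (∀ f g h, P f (g * h) = g * (P f h) + (P f g) * h) ∧
          (∀ f g h, P f (P g h) + P g (P h f) + P h (P f g) = 0) ∧
          -- whose value on generators is {u,v} = Φ(u⊗v) projected to S²V :
          (∀ u v : V, P (ι u) (ι v) =
            (LinearMap.mul' k (MvPolynomial (Fin n) k))
              ((TensorProduct.map ι ι) (Φ (u ⊗ₜ v))))) ↔
        (∀ u v w : V, schoutenEnd k V Φ (altTriple k V u v w) ∈ symKernel k V)) := by
  intro ι hι
  subst hι
  set ι : V →ₗ[k] MvPolynomial (Fin n) k :=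
    (Module.Basis.constr b k) (fun i => (MvPolynomial.X i : MvPolynomial (Fin n) k)) with hι
  constructor
  · rintro ⟨P, hsk, hbd, hjac, hgen⟩ u v w
    have hgen' : ∀ u v : V, P (ι u) (ι v) = mu2 k V ι (Φ (u ⊗ₜ v)) := by
      intro u v
      simpa [mu2] using hgen u v
    apply ker_mu3 k V b
    have hkey := key k V ι Φ hskew P hsk hbd hgen'
    simp only [altTriple, map_sub, map_add, ← hι, hkey]
    linear_combination hjac (ι u) (ι v) (ι w) - hjac (ι u) (ι w) (ι v) -
      hjac (ι v) (ι u) (ι w) + hjac (ι v) (ι w) (ι u) + hjac (ι w) (ι u) (ι v) -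
      hjac (ι w) (ι v) (ι u)
  · intro hS
    have Psk := Pmap_skew k V b Φ hskew
    have Pbd := Pmap_bider k V b Φ
    have Pgn := Pmap_gen k V b Φ
    refine ⟨Pmap k V b Φ, Psk, Pbd, ?_, ?_⟩
    · apply jacobi_of_base k (Pmap k V b Φ) Psk Pbd
      intro p q r
      have hkey := key k V ι Φ hskew (Pmap k V b Φ) Psk Pbd Pgn
      have h0 : mu3 k V ι (schoutenEnd k V Φ (altTriple k V (b p) (b q) (b r))) = 0 :=
        mu3_symKernel k V ι _ (hS (b p) (b q) (b r))
      simp only [altTriple, map_sub, map_add, ← hι, hkey] at h0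
      simp only [hι, Module.Basis.constr_basis] at h0
      have hswap := Jswap k (Pmap k V b Φ) Psk (X p) (X q) (X r)
      have h6 : (6 : MvPolynomial (Fin n) k) *
          (((Pmap k V b Φ) (X p)) (((Pmap k V b Φ) (X q)) (X r)) +
           ((Pmap k V b Φ) (X q)) (((Pmap k V b Φ) (X r)) (X p)) +
           ((Pmap k V b Φ) (X r)) (((Pmap k V b Φ) (X p)) (X q))) = 0 := by
        linear_combination h0 + 3 * hswap
      have hne : (6 : MvPolynomial (Fin n) k) ≠ 0 := by
        have h : (6 : MvPolynomial (Fin n) k) = MvPolynomial.C (6:k) := by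
          simp [map_ofNat]
        rw [h, Ne, MvPolynomial.C_eq_zero]
        norm_num
      exact (mul_eq_zero.mp h6).resolve_left hne
    · intro u v
      exact Pgn u v
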